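/- arXiv:2010.13176 — 3 statements merged into one kernel-verified Lean document; each statement's English description precedes it below -/
import Mathlib

section
/- Let G be a group, c a left-invariant circular ordering of G, and h ∈ G̃_c. Then the sequence n ↦ [hⁿ]_c / n converges to a real limit r̃ot_c(h). Moreover, if g̃ and g̃′ are two lifts in G̃_c of the same element g ∈ G, then r̃ot_c(g̃) − r̃ot_c(g̃′) is an integer, and for any g, h ∈ G the quantity r̃ot_c(g̃h̃) − r̃ot_c(g̃) − r̃ot_c(h̃) is independent of the chosen lifts g̃ of g and h̃ of h. -/
namespace Paper

variable {G : Type*} [Group G]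

/-- A left-invariant circular ordering of a group `G`, as a function `G³ → {0, ±1} ⊆ ℤ`. -/
def IsCircOrd (c : G → G → G → ℤ) : Prop :=
  (∀ g₁ g₂ g₃ : G, c g₁ g₂ g₃ = 0 ↔ (g₁ = g₂ ∨ g₁ = g₃ ∨ g₂ = g₃)) ∧
  (∀ g₁ g₂ g₃ : G, c g₁ g₂ g₃ = 0 ∨ c g₁ g₂ g₃ = 1 ∨ c g₁ g₂ g₃ = -1) ∧
  (∀ g₁ g₂ g₃ g₄ : G, c g₂ g₃ g₄ - c g₁ g₃ g₄ + c g₁ g₂ g₄ - c g₁ g₂ g₃ = 0) ∧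
  (∀ g g₁ g₂ g₃ : G, c (g*g₁) (g*g₂) (g*g₃) = c g₁ g₂ g₃)

/-- The space CO(G) of circular orderings, topologized as a subspace of `ℤ^{G³}`
(all relevant values lie in the discrete set `{0,±1}`, and `ℤ` carries the discrete
topology, so this is the subspace topology from the product topology on `{0,±1}^{G³}`). -/
abbrev CircOrd (G : Type*) [Group G] := {c : G → G → G → ℤ // IsCircOrd c}

open Classical in
/-- The cocycle `f_c`: `f_c(g,h) = 0` if `g = 1` or `h = 1` or `c(1,g,gh) = 1`,
and `f_c(g,h) = 1` otherwise (i.e. when `gh = 1 ≠ g`, or `c(1,gh,g) = 1`). -/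
noncomputable def fc (c : G → G → G → ℤ) (g h : G) : ℤ :=
  if g = 1 ∨ h = 1 ∨ c 1 g (g*h) = 1 then 0 else 1

/-- Multiplication in the central extension `G̃_c = G × ℤ`:
`(g,n)(h,m) = (gh, n+m+f_c(g,h))`. -/
noncomputable def liftMul (c : G → G → G → ℤ) (x y : G × ℤ) : G × ℤ :=
  (x.1 * y.1, x.2 + y.2 + fc c x.1 y.1)

/-- Powers (with natural number exponents) in `G̃_c`. -/
noncomputable def liftPow (c : G → G → G → ℤ) (x : G × ℤ) : ℕ → G × ℤ
  | 0 => (1, 0)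
  | n+1 => liftMul c (liftPow c x n) x

/-- `[h]_c`: the unique integer `k` with `z_c^k ≤_c h <_c z_c^{k+1}`, where `<_c` is the
left-ordering of `G̃_c` with positive cone `{(g,n) : n ≥ 0} ∖ {(1,0)}` and `z_c = (1,1)`.
Since `z_c^k = (1,k)` and `f_c(g,g⁻¹) = 1` for `g ≠ 1`, this is exactly the second
coordinate of `h`. -/
def liftFloor (h : G × ℤ) : ℤ := h.2

/-- The translation number `r̃ot_c(h)` of `h ∈ G̃_c`: the limit of `[hⁿ]_c / n`
(`limUnder` picks out the limit when it exists). -/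
noncomputable def rotTilde (c : G → G → G → ℤ) (h : G × ℤ) : ℝ :=
  Filter.limUnder Filter.atTop (fun n : ℕ => (liftFloor (liftPow c h n) : ℝ) / (n : ℝ))

/-- The rotation number `rot_c(g) ∈ ℝ/ℤ`, computed using the lift `(g,0) ∈ G̃_c`
(it is independent of the choice of lift). -/
noncomputable def rotc (c : G → G → G → ℤ) (g : G) : AddCircle (1:ℝ) :=
  ((rotTilde c (g, 0) : ℝ) : AddCircle (1:ℝ))

/-- `τ_c(g,h) = r̃ot_c(g̃h̃) − r̃ot_c(g̃) − r̃ot_c(h̃)`, computed using the lifts `(g,0)`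
and `(h,0)` (it is independent of the choice of lifts). -/
noncomputable def tauc (c : G → G → G → ℤ) (g h : G) : ℝ :=
  rotTilde c (liftMul c (g,0) (h,0)) - rotTilde c (g,0) - rotTilde c (h,0)

/-- A positive cone of a group `G`: `P · P ⊆ P` and `P ∪ P⁻¹ = G ∖ {1}`.
It determines a left-ordering by `g < h` iff `g⁻¹h ∈ P`. -/
def IsPositiveCone (P : Set G) : Prop :=
  (∀ a ∈ P, ∀ b ∈ P, a * b ∈ P) ∧ (P ∪ P⁻¹ = {g : G | g ≠ 1})

/-- The left-ordering determined by a positive cone. -/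
def coneLt (P : Set G) (a b : G) : Prop := a⁻¹ * b ∈ P

open Classical in
/-- The secret left-ordering `c_<` determined by a positive cone `P`:
`c_<(a,b,c) = sign σ` where `σ` is the permutation sorting `(a,b,c)` into increasing
order, i.e. `c_< = 1` on positively cyclically ordered triples, `-1` on negatively
cyclically ordered triples, and `0` when the entries are not all distinct. -/
noncomputable def circOfCone (P : Set G) : G → G → G → ℤ := fun a b c =>
  if (coneLt P a b ∧ coneLt P b c) ∨ (coneLt P b c ∧ coneLt P c a) ∨
      (coneLt P c a ∧ coneLt P a b) then 1
  else if (coneLt P c b ∧ coneLt P b a) ∨ (coneLt P b a ∧ coneLt P a c) ∨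
      (coneLt P a c ∧ coneLt P c b) then -1
  else 0

/-- A circular ordering is a *secret left-ordering* if it is `c_<` for some
left-ordering `<` of `G`. -/
def IsSecret (c : G → G → G → ℤ) : Prop := ∃ P : Set G, IsPositiveCone P ∧ c = circOfCone P

section Aux
variable {c : G → G → G → ℤ}

lemma swap12 (hc : IsCircOrd c) (a b d : G) : c b a d = - c a b d := by
  have h := hc.2.2.1 a b a d
  have h1 : c a a d = 0 := (hc.1 a a d).2 (Or.inl rfl)
  have h2 : c a b a = 0 := (hc.1 a b a).2 (Or.inr (Or.inl rfl))
  omega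

lemma swap23 (hc : IsCircOrd c) (a b d : G) : c a d b = - c a b d := by
  have h := hc.2.2.1 a b d b
  have h1 : c b d b = 0 := (hc.1 b d b).2 (Or.inr (Or.inl rfl))
  have h2 : c a b b = 0 := (hc.1 a b b).2 (Or.inr (Or.inr rfl))
  omega

lemma cyc (hc : IsCircOrd c) (a b d : G) : c d a b = c a b d := by
  rw [swap12 hc, swap23 hc]; ring

lemma c_pm (hc : IsCircOrd c) {a b d : G} (h1 : a ≠ b) (h2 : a ≠ d) (h3 : b ≠ d) :
    c a b d = 1 ∨ c a b d = -1 := by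
  rcases hc.2.1 a b d with h | h | h
  · rcases (hc.1 a b d).1 h with e | e | e <;> [exact absurd e h1; exact absurd e h2;
      exact absurd e h3]
  · exact Or.inl h
  · exact Or.inr h

lemma fc_one_left (h : G) : fc c 1 h = 0 := by simp [fc]

lemma fc_one_right (g : G) : fc c g 1 = 0 := by simp [fc]

lemma fc_nonneg (g h : G) : 0 ≤ fc c g h := by unfold fc; split <;> omega

lemma fc_le_one (g h : G) : fc c g h ≤ 1 := by unfold fc; split <;> omega

lemma fc_inv (hc : IsCircOrd c) {g h : G} (hg : g ≠ 1) (hgh : g * h = 1) : fc c g h = 1 := by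
  have hh : h ≠ 1 := by rintro rfl; rw [mul_one] at hgh; exact hg hgh
  have h0 : c 1 g (g*h) = 0 := by
    rw [hgh]; exact (hc.1 1 g 1).2 (Or.inr (Or.inl rfl))
  rw [fc, if_neg]; rintro (e | e | e) <;> [exact hg e; exact hh e; omega]

lemma fc_of_ne (hc : IsCircOrd c) {g h : G} (hg : g ≠ 1) (hh : h ≠ 1) (hgh : g * h ≠ 1) :
    (c 1 g (g*h) = 1 ∧ fc c g h = 0) ∨ (c 1 g (g*h) = -1 ∧ fc c g h = 1) := by
  have hne : g ≠ g * h := by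
    intro e
    have : g * 1 = g * h := by rw [mul_one]; exact e
    exact hh (mul_left_cancel this).symm
  rcases c_pm hc (a := 1) (b := g) (d := g*h) (fun e => hg e.symm) (fun e => hgh e.symm) hne with
    hv | hv
  · exact Or.inl ⟨hv, by rw [fc, if_pos (Or.inr (Or.inr hv))]⟩
  · refine Or.inr ⟨hv, ?_⟩
    rw [fc, if_neg]; rintro (e | e | e) <;> [exact hg e; exact hh e; omega]

lemma fc_cocycle (hc : IsCircOrd c) (g h k : G) :
    fc c h k + fc c g (h*k) = fc c g h + fc c (g*h) k := by
  by_cases hg : g = 1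
  · subst hg; simp [fc_one_left, one_mul]
  by_cases hh : h = 1
  · subst hh; simp [fc_one_left, fc_one_right, one_mul, mul_one]
  by_cases hk : k = 1
  · subst hk; simp [fc_one_right, mul_one]
  by_cases hgh : g * h = 1
  · have fgh : fc c g h = 1 := fc_inv hc hg hgh
    have fghk : fc c (g*h) k = 0 := by rw [hgh, fc_one_left]
    rw [fgh, fghk]
    by_cases hhk : h * k = 1
    · rw [fc_inv hc hh hhk, hhk, fc_one_right]
    · have hgk : g * (h * k) = k := by rw [← mul_assoc, hgh, one_mul]
      have hhg : h * g = 1 := by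
        have : g = h⁻¹ := eq_inv_of_mul_eq_one_left hgh
        rw [this, mul_inv_cancel]
      have hinv : c 1 g (g * (h*k)) = - c 1 h (h*k) := by
        have e1 := hc.2.2.2 h 1 g k
        rw [mul_one, hhg] at e1
        rw [hgk, ← e1, swap12 hc]
      rcases fc_of_ne hc hh hk hhk with ⟨e1, e2⟩ | ⟨e1, e2⟩ <;>
        rcases fc_of_ne hc hg hhk (by rw [hgk]; exact hk) with ⟨e3, e4⟩ | ⟨e3, e4⟩ <;> omega
  by_cases hhk : h * k = 1
  · have fhk : fc c h k = 1 := fc_inv hc hh hhk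
    have fghk : fc c g (h*k) = 0 := by rw [hhk, fc_one_right]
    rw [fhk, fghk]
    have hgk : (g * h) * k = g := by rw [mul_assoc, hhk, mul_one]
    have hrel : c 1 (g*h) ((g*h)*k) = - c 1 g (g*h) := by
      rw [hgk, swap23 hc]
    rcases fc_of_ne hc hg hh hgh with ⟨e1, e2⟩ | ⟨e1, e2⟩ <;>
      rcases fc_of_ne hc hgh hk (by rw [hgk]; exact hg) with ⟨e3, e4⟩ | ⟨e3, e4⟩ <;> omega
  by_cases hghk : g * h * k = 1
  · have f1 : fc c (g*h) k = 1 := fc_inv hc hgh hghk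
    have f2 : fc c g (h*k) = 1 := fc_inv hc hg (by rw [← mul_assoc]; exact hghk)
    rw [f1, f2]
    have hrel : c 1 h (h*k) = c 1 g (g*h) := by
      have e1 := hc.2.2.2 g 1 h (h*k)
      rw [mul_one, ← mul_assoc, hghk] at e1
      exact e1.symm.trans (cyc hc g (g*h) 1).symm
    rcases fc_of_ne hc hh hk hhk with ⟨e1, e2⟩ | ⟨e1, e2⟩ <;>
      rcases fc_of_ne hc hg hh hgh with ⟨e3, e4⟩ | ⟨e3, e4⟩ <;> omega
  · -- generic case
    have hghk' : g * (h * k) ≠ 1 := by rw [← mul_assoc]; exact hghk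
    have e1 := hc.2.2.1 1 g (g*h) (g*h*k)
    have e2 := hc.2.2.2 g 1 h (h*k)
    rw [mul_one, ← mul_assoc] at e2
    have hassoc : g * (h*k) = g*h*k := (mul_assoc g h k).symm
    rcases fc_of_ne hc hh hk hhk with ⟨a1, a2⟩ | ⟨a1, a2⟩ <;>
      rcases fc_of_ne hc hg hhk hghk' with ⟨b1, b2⟩ | ⟨b1, b2⟩ <;>
      rcases fc_of_ne hc hg hh hgh with ⟨d1, d2⟩ | ⟨d1, d2⟩ <;>
      rcases fc_of_ne hc hgh hk hghk with ⟨f1, f2⟩ | ⟨f1, f2⟩ <;>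
      rw [hassoc] at b1 <;> omega

end Aux

section Aux2
open Filter Topology
variable {c : G → G → G → ℤ}

lemma liftMul_assoc (hc : IsCircOrd c) (x y z : G × ℤ) :
    liftMul c (liftMul c x y) z = liftMul c x (liftMul c y z) := by
  have h := fc_cocycle hc x.1 y.1 z.1
  simp only [liftMul, Prod.mk.injEq]
  exact ⟨mul_assoc _ _ _, by omega⟩

lemma liftMul_one (x : G × ℤ) : liftMul c x (1, 0) = x := by
  simp [liftMul, fc_one_right]

lemma liftPow_fst (x : G × ℤ) : ∀ n : ℕ, (liftPow c x n).1 = x.1 ^ n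
  | 0 => by simp [liftPow]
  | n + 1 => by
    rw [liftPow]; simp [liftMul, liftPow_fst x n, pow_succ]

lemma liftPow_add (hc : IsCircOrd c) (x : G × ℤ) (m n : ℕ) :
    liftPow c x (m + n) = liftMul c (liftPow c x m) (liftPow c x n) := by
  induction n with
  | zero => simp [liftPow, liftMul_one]
  | succ n ih =>
    have : m + (n + 1) = (m + n) + 1 := by omega
    rw [this, liftPow, ih, liftMul_assoc hc, ← liftPow]

lemma liftPow_snd_add (hc : IsCircOrd c) (x : G × ℤ) (m n : ℕ) :
    (liftPow c x (m + n)).2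
      = (liftPow c x m).2 + (liftPow c x n).2 + fc c (x.1 ^ m) (x.1 ^ n) := by
  rw [liftPow_add hc]
  simp only [liftMul]
  rw [liftPow_fst, liftPow_fst]

lemma liftPow_snd_lower (x : G × ℤ) : ∀ n : ℕ, (n : ℤ) * x.2 ≤ (liftPow c x n).2
  | 0 => by simp [liftPow]
  | n + 1 => by
    have h1 := liftPow_snd_lower x n
    have h2 : (0:ℤ) ≤ fc c (liftPow c x n).1 x.1 := fc_nonneg _ _
    have h3 : ((n + 1 : ℕ) : ℤ) * x.2 = (n : ℤ) * x.2 + x.2 := by push_cast; ring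
    rw [liftPow]
    simp only [liftMul]
    omega

lemma tendsto_rot (hc : IsCircOrd c) (x : G × ℤ) :
    Filter.Tendsto (fun n : ℕ => ((liftPow c x n).2 : ℝ) / (n : ℝ))
      Filter.atTop (nhds (rotTilde c x)) := by
  set u : ℕ → ℝ := fun n => ((liftPow c x n).2 : ℝ) + 1 with hu
  have hsub : Subadditive u := by
    intro m n
    have h := liftPow_snd_add hc x m n
    have h2 : fc c (x.1 ^ m) (x.1 ^ n) ≤ 1 := fc_le_one _ _
    simp only [hu]
    rw [h]
    push_cast
    have h2' : (fc c (x.1 ^ m) (x.1 ^ n) : ℝ) ≤ 1 := by exact_mod_cast h2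
    linarith
  have hbdd : BddBelow (Set.range fun n : ℕ => u n / n) := by
    refine ⟨min (x.2 : ℝ) 0, ?_⟩
    rintro r ⟨n, rfl⟩
    rcases Nat.eq_zero_or_pos n with rfl | hn
    · simp [hu]
    · have h1 := liftPow_snd_lower (c := c) x n
      have hn' : (0:ℝ) < n := by exact_mod_cast hn
      have hle : (x.2 : ℝ) ≤ u n / n := by
        rw [le_div_iff₀ hn']
        have h1' : ((n:ℝ)) * (x.2:ℝ) ≤ ((liftPow c x n).2 : ℝ) := by exact_mod_cast h1
        simp only [hu]
        nlinarith
      exact le_trans (min_le_left _ _) hle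
  have hlim := hsub.tendsto_lim hbdd
  have h3 : Filter.Tendsto (fun n : ℕ => u n / n - 1 / n) Filter.atTop
      (nhds (hsub.lim - 0)) := hlim.sub tendsto_one_div_atTop_nhds_zero_nat
  rw [sub_zero] at h3
  have h2 : Filter.Tendsto (fun n : ℕ => ((liftPow c x n).2 : ℝ) / n) Filter.atTop
      (nhds hsub.lim) := by
    refine h3.congr fun n => ?_
    rw [div_sub_div_same]
    simp [hu]
  have hrot : rotTilde c x = hsub.lim := by
    rw [rotTilde]
    exact h2.limUnder_eq
  rw [hrot]
  exact h2

lemma liftPow_shift (g : G) (m : ℤ) :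
    ∀ n : ℕ, (liftPow c (g, m) n).2 = (liftPow c (g, 0) n).2 + (n : ℤ) * m
  | 0 => by simp [liftPow]
  | n + 1 => by
    rw [liftPow, liftPow]
    simp only [liftMul]
    rw [liftPow_fst, liftPow_fst, liftPow_shift g m n]
    push_cast
    ring

lemma rot_shift (hc : IsCircOrd c) (g : G) (m : ℤ) :
    rotTilde c (g, m) = rotTilde c (g, 0) + (m : ℝ) := by
  have h1 := tendsto_rot hc (g, m)
  have h4 : Filter.Tendsto (fun n : ℕ => ((liftPow c (g, 0) n).2 : ℝ) / n + (m : ℝ))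
      Filter.atTop (nhds (rotTilde c (g, 0) + m)) :=
    (tendsto_rot hc (g, 0)).add tendsto_const_nhds
  have h3 : Filter.Tendsto (fun n : ℕ => ((liftPow c (g, m) n).2 : ℝ) / n)
      Filter.atTop (nhds (rotTilde c (g, 0) + m)) := by
    refine h4.congr' ?_
    filter_upwards [Filter.eventually_ge_atTop 1] with n hn
    have hn' : (n : ℝ) ≠ 0 := by
      have : 0 < n := hn
      positivity
    rw [liftPow_shift g m n]
    push_cast
    field_simp
  exact tendsto_nhds_unique h1 h3

end Aux2

/-- Definition 4.5 / Proposition (existence of translation numbers and independence of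
lifts): for every `h ∈ G̃_c` the sequence `[hⁿ]_c/n` converges (to `r̃ot_c(h)`); the
translation numbers of two lifts of the same `g ∈ G` differ by an integer; and
`r̃ot_c(g̃h̃) − r̃ot_c(g̃) − r̃ot_c(h̃)` does not depend on the choice of lifts. -/
theorem stmt3 (c : G → G → G → ℤ) (hc : IsCircOrd c) :
    (∀ h : G × ℤ,
      Filter.Tendsto (fun n : ℕ => (liftFloor (liftPow c h n) : ℝ) / (n : ℝ))
        Filter.atTop (nhds (rotTilde c h))) ∧
    (∀ g : G, ∀ m m' : ℤ, ∃ k : ℤ, rotTilde c (g, m) - rotTilde c (g, m') = (k : ℝ)) ∧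
    (∀ g h : G, ∀ m m' k k' : ℤ,
      rotTilde c (liftMul c (g, m) (h, k)) - rotTilde c (g, m) - rotTilde c (h, k) =
      rotTilde c (liftMul c (g, m') (h, k')) - rotTilde c (g, m') - rotTilde c (h, k')) := by
  refine ⟨fun h => tendsto_rot hc h, fun g m m' => ?_, fun g h m m' k k' => ?_⟩
  · exact ⟨m - m', by rw [rot_shift hc g m, rot_shift hc g m']; push_cast; ring⟩
  · have e : ∀ m k : ℤ,
        rotTilde c (liftMul c (g, m) (h, k)) - rotTilde c (g, m) - rotTilde c (h, k)
          = rotTilde c (g * h, 0) + (fc c g h : ℝ) - rotTilde c (g, 0) - rotTilde c (h, 0) := by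
      intro m k
      have hmul : liftMul c (g, m) (h, k) = (g * h, m + k + fc c g h) := rfl
      rw [hmul, rot_shift hc (g*h) (m + k + fc c g h), rot_shift hc g m, rot_shift hc h k]
      push_cast
      ring
    rw [e m k, e m' k']


end Paper
end

section
/- Let G be a group, let c and d be left-invariant circular orderings of G, let g ∈ G, and let n ≥ 1. If d(id, gⁱ, g^{i+1}) = c(id, gⁱ, g^{i+1}) for all i = 1, …, n, then [hⁿ]_d = [g̃ⁿ]_c, where g̃ = (g,0) ∈ G̃_c and h = (g,0) ∈ G̃_d. -/
namespace Paper

variable {G : Type*} [Group G]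

/-- Lemma 4.9: if the circular orderings `c` and `d` agree on the triples
`(1, gⁱ, g^{i+1})` for `i = 1, …, n`, then `[hⁿ]_d = [g̃ⁿ]_c`, where `g̃ = (g,0) ∈ G̃_c`
and `h = (g,0) ∈ G̃_d`. -/
theorem stmt5 (c d : G → G → G → ℤ) (hc : IsCircOrd c) (hd : IsCircOrd d)
    (g : G) (n : ℕ) (hn : 1 ≤ n)
    (hagree : ∀ i : ℕ, 1 ≤ i → i ≤ n → d 1 (g ^ i) (g ^ (i + 1)) = c 1 (g ^ i) (g ^ (i + 1))) :
    liftFloor (liftPow d (g, 0) n) = liftFloor (liftPow c (g, 0) n) := by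
  have hfst : ∀ (e : G → G → G → ℤ) (m : ℕ), (liftPow e (g, 0) m).1 = g ^ m := by
    intro e m
    induction m with
    | zero => simp [liftPow]
    | succ k ih => simp [liftPow, liftMul, ih, pow_succ]
  have key : ∀ m : ℕ, m ≤ n →
      liftFloor (liftPow d (g, 0) m) = liftFloor (liftPow c (g, 0) m) := by
    intro m hm
    induction m with
    | zero => rfl
    | succ k ih =>
      have ihk := ih (le_trans (Nat.le_succ k) hm)
      have hfc : fc d (g ^ k) g = fc c (g ^ k) g := by
        rcases Nat.eq_zero_or_pos k with hk | hk
        · subst hk; simp [fc]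
        · have := hagree k hk (le_trans (Nat.le_succ k) hm)
          rw [pow_succ] at this
          simp only [fc]
          rw [this]
      simp only [liftFloor, liftPow, liftMul, hfst]
      simp only [liftFloor] at ihk
      rw [ihk, hfc]
  exact key n le_rfl

end Paper
end

section
/- Let 1 → K → G → H → 1 be a short exact sequence of groups, with q : G → H the surjection with kernel K, and let < be a left-ordering of K. For each left-invariant circular ordering c of H define φ_<(c) : G³ → {0,±1} by: φ_<(c)(g₁,g₂,g₃) = c(q(g₁),q(g₂),q(g₃)) if q(g₁), q(g₂), q(g₃) are pairwise distinct; φ_<(c)(g₁,g₂,g₃) = c_<(g₂⁻¹g₁, id, g₁⁻¹g₂) if q(g₁) = q(g₂) ≠ q(g₃); φ_<(c)(g₁,g₂,g₃) = c_<(id, g₁⁻¹g₂, g₁⁻¹g₃) if q(g₁) = q(g₂) = q(g₃); and the remaining cases where exactly two of q(g₁), q(g₂), q(g₃) coincide are determined by cyclic invariance, φ_<(c)(g₁,g₂,g₃) = φ_<(c)(g₂,g₃,g₁). Then φ_<(c) is a left-invariant circular ordering of G for every c ∈ CO(H), and the resulting map φ_< : CO(H) → CO(G) is continuous. -/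
namespace Paper

variable {G : Type*} [Group G]

/-- `P` is the positive cone of a left-ordering of the subgroup `K` of `G`:
`P · P ⊆ P` and `P ∪ P⁻¹ = K ∖ {1}`. -/
def IsPositiveConeOn (K : Subgroup G) (P : Set G) : Prop :=
  (∀ a ∈ P, ∀ b ∈ P, a * b ∈ P) ∧ (P ∪ P⁻¹ = {g : G | g ∈ K ∧ g ≠ 1})

open Classical in
/-- The lexicographic extension `φ_<(c)` of a circular ordering `c` of `H` along a
surjection `q : G → H` with left-ordered kernel (ordering given by the cone `P`); the
cases where exactly two of the images coincide are determined by cyclic invariance. -/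
noncomputable def lexExt {H : Type*} [Group H] (q : G →* H) (P : Set G)
    (c : H → H → H → ℤ) : G → G → G → ℤ := fun g₁ g₂ g₃ =>
  if q g₁ ≠ q g₂ ∧ q g₁ ≠ q g₃ ∧ q g₂ ≠ q g₃ then c (q g₁) (q g₂) (q g₃)
  else if q g₁ = q g₂ ∧ q g₂ = q g₃ then circOfCone P 1 (g₁⁻¹ * g₂) (g₁⁻¹ * g₃)
  else if q g₁ = q g₂ then circOfCone P (g₂⁻¹ * g₁) 1 (g₁⁻¹ * g₂)
  else if q g₂ = q g₃ then circOfCone P (g₃⁻¹ * g₂) 1 (g₂⁻¹ * g₃)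
  else circOfCone P (g₁⁻¹ * g₃) 1 (g₃⁻¹ * g₁)

section Aux

variable {K : Subgroup G} {P : Set G}

open Classical in
/-- Sign of an element w.r.t. a cone. -/
noncomputable def Sg (P : Set G) (x : G) : ℤ :=
  if x ∈ P then 1 else if x⁻¹ ∈ P then -1 else 0

lemma one_not_P (hP : IsPositiveConeOn K P) : (1:G) ∉ P := by
  intro h
  have : (1:G) ∈ P ∪ P⁻¹ := Or.inl h
  rw [hP.2] at this
  exact this.2 rfl

lemma notboth (hP : IsPositiveConeOn K P) {x : G} (h : x ∈ P) (h' : x⁻¹ ∈ P) : False := by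
  have := hP.1 x h x⁻¹ h'
  simp at this
  exact one_not_P hP this

lemma memP_K (hP : IsPositiveConeOn K P) {x : G} (h : x ∈ P) : x ∈ K := by
  have : x ∈ P ∪ P⁻¹ := Or.inl h
  rw [hP.2] at this
  exact this.1

lemma tri (hP : IsPositiveConeOn K P) {x : G} (hx : x ∈ K) :
    x = 1 ∨ (x ∈ P ∧ x⁻¹ ∉ P) ∨ (x⁻¹ ∈ P ∧ x ∉ P) := by
  by_cases h1 : x = 1
  · exact Or.inl h1
  · have : x ∈ P ∪ P⁻¹ := by rw [hP.2]; exact ⟨hx, h1⟩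
    rcases this with h | h
    · exact Or.inr (Or.inl ⟨h, fun h' => notboth hP h h'⟩)
    · have h : x⁻¹ ∈ P := h
      exact Or.inr (Or.inr ⟨h, fun h' => notboth hP h' h⟩)

lemma Sg_one (hP : IsPositiveConeOn K P) : Sg P (1:G) = 0 := by
  simp [Sg, one_not_P hP]

lemma Sg_inv (hP : IsPositiveConeOn K P) {x : G} (hx : x ∈ K) : Sg P x⁻¹ = - Sg P x := by
  rcases tri hP hx with rfl | ⟨h, h'⟩ | ⟨h, h'⟩ <;> simp [Sg, *, one_not_P hP]

lemma Sg_zero_iff (hP : IsPositiveConeOn K P) {x : G} (hx : x ∈ K) :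
    Sg P x = 0 ↔ x = 1 := by
  rcases tri hP hx with rfl | ⟨h, h'⟩ | ⟨h, h'⟩
  · simp [Sg, one_not_P hP]
  · simp only [Sg, if_pos h]
    constructor
    · intro h; omega
    · rintro rfl; exact absurd h (one_not_P hP)
  · simp only [Sg, if_neg h', if_pos h]
    constructor
    · intro h; omega
    · rintro rfl; exact absurd h (by simpa using h')

lemma coneLt_irrefl (hP : IsPositiveConeOn K P) (x : G) : ¬ coneLt P x x := by
  simp [coneLt, one_not_P hP]

lemma coneLt_asymm (hP : IsPositiveConeOn K P) {x y : G} (h : coneLt P x y) :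
    ¬ coneLt P y x := by
  intro h'
  exact notboth hP h (by simpa [coneLt, mul_inv_rev] using h')

end Aux
section Aux2

variable {K : Subgroup G} {P : Set G}

lemma cc_cyc (P : Set G) (a b c : G) : circOfCone P a b c = circOfCone P b c a := by
  classical
  unfold circOfCone
  have h1 : ((coneLt P a b ∧ coneLt P b c) ∨ (coneLt P b c ∧ coneLt P c a) ∨
      (coneLt P c a ∧ coneLt P a b)) ↔ ((coneLt P b c ∧ coneLt P c a) ∨
      (coneLt P c a ∧ coneLt P a b) ∨ (coneLt P a b ∧ coneLt P b c)) := by tauto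
  have h2 : ((coneLt P c b ∧ coneLt P b a) ∨ (coneLt P b a ∧ coneLt P a c) ∨
      (coneLt P a c ∧ coneLt P c b)) ↔ ((coneLt P a c ∧ coneLt P c b) ∨
      (coneLt P c b ∧ coneLt P b a) ∨ (coneLt P b a ∧ coneLt P a c)) := by tauto
  rw [if_congr h1 rfl (if_congr h2 rfl rfl)]

lemma or_rot {X Y Z : Prop} : (X ∨ Y ∨ Z) ↔ (Y ∨ Z ∨ X) := by tauto

lemma cc_swap (hP : IsPositiveConeOn K P) (a b c : G) :
    circOfCone P a c b = - circOfCone P a b c := by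
  classical
  have hab := coneLt_asymm (K := K) (P := P) hP (x := a) (y := b)
  have hbc := coneLt_asymm (K := K) (P := P) hP (x := b) (y := c)
  have hac := coneLt_asymm (K := K) (P := P) hP (x := a) (y := c)
  set A := (coneLt P a b ∧ coneLt P b c) ∨ (coneLt P b c ∧ coneLt P c a) ∨
      (coneLt P c a ∧ coneLt P a b) with hAdef
  set B := (coneLt P c b ∧ coneLt P b a) ∨ (coneLt P b a ∧ coneLt P a c) ∨
      (coneLt P a c ∧ coneLt P c b) with hBdef
  have e1 : ((coneLt P a c ∧ coneLt P c b) ∨ (coneLt P c b ∧ coneLt P b a) ∨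
      (coneLt P b a ∧ coneLt P a c)) ↔ B := by rw [hBdef, or_rot]
  have e2 : ((coneLt P b c ∧ coneLt P c a) ∨ (coneLt P c a ∧ coneLt P a b) ∨
      (coneLt P a b ∧ coneLt P b c)) ↔ A := by rw [hAdef, or_rot]; exact or_rot
  have hdisj : ¬ (A ∧ B) := by
    rw [hAdef, hBdef]
    rintro ⟨hA1 | hA1 | hA1, hB1 | hB1 | hB1⟩
    · exact hab hA1.1 hB1.2
    · exact hab hA1.1 hB1.1
    · exact hbc hA1.2 hB1.2
    · exact hbc hA1.1 hB1.1
    · exact hac hB1.2 hA1.2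
    · exact hac hB1.1 hA1.2
    · exact hab hA1.2 hB1.2
    · exact hab hA1.2 hB1.1
    · exact hac hB1.1 hA1.1
  show (if ((coneLt P a c ∧ coneLt P c b) ∨ (coneLt P c b ∧ coneLt P b a) ∨
      (coneLt P b a ∧ coneLt P a c)) then (1:ℤ) else if ((coneLt P b c ∧ coneLt P c a) ∨
      (coneLt P c a ∧ coneLt P a b) ∨ (coneLt P a b ∧ coneLt P b c)) then -1 else 0) =
      - (if A then 1 else if B then -1 else 0)
  rw [if_congr e1 rfl (if_congr e2 rfl rfl)]
  by_cases hA : A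
  · rw [if_neg (fun hB => hdisj ⟨hA, hB⟩), if_pos hA, if_pos hA]
  · rw [if_neg hA, if_neg hA]
    by_cases hB : B
    · rw [if_pos hB, if_pos hB]; ring
    · rw [if_neg hB, if_neg hB]; ring

lemma cc_zero12 (hP : IsPositiveConeOn K P) (a c : G) : circOfCone P a a c = 0 := by
  classical
  have h1 := coneLt_irrefl hP a
  have h2 := coneLt_asymm (K := K) (P := P) hP (x := a) (y := c)
  unfold circOfCone
  rw [if_neg (by tauto), if_neg (by tauto)]

lemma cc_zero13 (hP : IsPositiveConeOn K P) (a b : G) : circOfCone P a b a = 0 := by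
  classical
  have h1 := coneLt_irrefl hP a
  have h2 := coneLt_asymm (K := K) (P := P) hP (x := a) (y := b)
  unfold circOfCone
  rw [if_neg (by tauto), if_neg (by tauto)]

lemma cc_zero23 (hP : IsPositiveConeOn K P) (a b : G) : circOfCone P a b b = 0 := by
  classical
  have h1 := coneLt_irrefl hP b
  have h2 := coneLt_asymm (K := K) (P := P) hP (x := a) (y := b)
  unfold circOfCone
  rw [if_neg (by tauto), if_neg (by tauto)]

lemma cc_pos {a b c : G} (h1 : coneLt P a b) (h2 : coneLt P b c) :
    circOfCone P a b c = 1 := by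
  classical
  unfold circOfCone
  rw [if_pos (Or.inl ⟨h1, h2⟩)]

lemma cc_range (P : Set G) (a b c : G) :
    circOfCone P a b c = 0 ∨ circOfCone P a b c = 1 ∨ circOfCone P a b c = -1 := by
  classical
  unfold circOfCone
  split_ifs <;> simp

lemma Sg_range (P : Set G) (x : G) : Sg P x = 0 ∨ Sg P x = 1 ∨ Sg P x = -1 := by
  classical
  unfold Sg
  split_ifs <;> simp

end Aux2
section Aux3

variable {K : Subgroup G} {P : Set G}

lemma coneLt_one_iff (x : G) : coneLt P 1 x ↔ x ∈ P := by simp [coneLt]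

lemma coneLt_inv_one (x : G) : coneLt P x⁻¹ 1 ↔ x ∈ P := by simp [coneLt]

lemma coneLt_one_inv (x : G) : coneLt P x 1 ↔ x⁻¹ ∈ P := by simp [coneLt]

lemma cc_inv_one (hP : IsPositiveConeOn K P) {x : G} (hx : x ∈ K) :
    circOfCone P x⁻¹ 1 x = Sg P x := by
  classical
  rcases tri hP hx with rfl | ⟨h, h'⟩ | ⟨h, h'⟩
  · simp only [inv_one]
    rw [cc_zero12 hP, Sg_one hP]
  · rw [cc_pos (P := P) ((coneLt_inv_one x).2 h) ((coneLt_one_iff x).2 h)]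
    simp [Sg, h]
  · have h1 : circOfCone P x 1 x⁻¹ = 1 :=
      cc_pos (P := P) ((coneLt_one_inv x).2 h) (by simpa using (coneLt_one_iff x⁻¹).2 h)
    have h2 : circOfCone P x⁻¹ 1 x = - circOfCone P x 1 x⁻¹ := by
      rw [cc_swap hP, cc_cyc]
    rw [h2, h1]
    simp [Sg, h, h']

lemma cc_leftinv (P : Set G) (g a b c : G) :
    circOfCone P (g*a) (g*b) (g*c) = circOfCone P a b c := by
  have h : ∀ x y : G, coneLt P (g*x) (g*y) ↔ coneLt P x y := by
    intro x y
    simp [coneLt, mul_inv_rev, mul_assoc]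
  classical
  have e1 : (coneLt P (g*a) (g*b) ∧ coneLt P (g*b) (g*c) ∨ coneLt P (g*b) (g*c) ∧
      coneLt P (g*c) (g*a) ∨ coneLt P (g*c) (g*a) ∧ coneLt P (g*a) (g*b)) ↔
      (coneLt P a b ∧ coneLt P b c ∨ coneLt P b c ∧ coneLt P c a ∨
      coneLt P c a ∧ coneLt P a b) := by simp only [h]
  have e2 : (coneLt P (g*c) (g*b) ∧ coneLt P (g*b) (g*a) ∨ coneLt P (g*b) (g*a) ∧
      coneLt P (g*a) (g*c) ∨ coneLt P (g*a) (g*c) ∧ coneLt P (g*c) (g*b)) ↔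
      (coneLt P c b ∧ coneLt P b a ∨ coneLt P b a ∧ coneLt P a c ∨
      coneLt P a c ∧ coneLt P c b) := by simp only [h]
  unfold circOfCone
  rw [if_congr e1 rfl (if_congr e2 rfl rfl)]

lemma kermul {x y : G} (hx : x ∈ K) (hy : y ∈ K) : x⁻¹ * y ∈ K :=
  mul_mem (inv_mem hx) hy

/-- The key computation: value of `circOfCone` on `(1,a,b)` in terms of signs. -/
lemma key (hP : IsPositiveConeOn K P) {a b : G} (ha : a ∈ K) (hb : b ∈ K) :
    circOfCone P 1 a b = Sg P (a⁻¹*b) - Sg P b + Sg P a := by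
  classical
  rcases tri hP ha with rfl | ⟨ha1, ha2⟩ | ⟨ha1, ha2⟩
  · rw [cc_zero12 hP]
    simp [Sg_one hP]
  all_goals rcases tri hP hb with rfl | ⟨hb1, hb2⟩ | ⟨hb1, hb2⟩
  · rw [cc_zero13 hP]
    rw [Sg_one hP, mul_one, Sg_inv hP ha]
    ring
  pick_goal 3
  · rw [cc_zero13 hP]
    rw [Sg_one hP, mul_one, Sg_inv hP ha]
    ring
  all_goals rcases tri hP (kermul ha hb) with hd | ⟨hd1, hd2⟩ | ⟨hd1, hd2⟩
  -- a ∈ P, b ∈ P, a⁻¹b = 1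
  · have hab : a = b := by rwa [inv_mul_eq_one] at hd
    subst hab
    rw [cc_zero23 hP]
    simp [Sg, ha1, one_not_P hP, hd]
  -- a ∈ P, b ∈ P, a⁻¹b ∈ P : 1 < a < b
  · rw [cc_pos (P := P) ((coneLt_one_iff a).2 ha1) hd1]
    simp [Sg, ha1, hb1, hd1]
  -- a ∈ P, b ∈ P, (a⁻¹b)⁻¹ ∈ P : 1 < b < a
  · have hba : coneLt P b a := by simpa [coneLt, mul_inv_rev] using hd1
    have hd1' : b⁻¹ * a ∈ P := by simpa [mul_inv_rev] using hd1
    have hv := cc_pos (P := P) ((coneLt_one_iff b).2 hb1) hba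
    rw [cc_swap hP 1 b a, hv]
    simp [Sg, ha1, hb1, hd1', hd2]
  -- a ∈ P, b⁻¹ ∈ P, a⁻¹b = 1 : contradiction
  · have hab : a = b := by rwa [inv_mul_eq_one] at hd
    subst hab
    exact absurd ha1 hb2
  -- a ∈ P, b⁻¹ ∈ P, a⁻¹b ∈ P : contradiction
  · exfalso
    have := hP.1 a ha1 _ hd1
    simp only [mul_inv_cancel_left] at this
    exact notboth hP this hb1
  -- a ∈ P, b⁻¹ ∈ P, b⁻¹a ∈ P : b < 1 < a
  · have hv := cc_pos (P := P) ((coneLt_one_inv b).2 hb1) ((coneLt_one_iff a).2 ha1)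
    rw [cc_cyc] at hv
    have hd1' : b⁻¹ * a ∈ P := by simpa [mul_inv_rev] using hd1
    rw [hv]
    simp [Sg, ha1, hb1, hb2, hd1', hd2]
  -- a⁻¹ ∈ P, b ∈ P, a⁻¹b = 1 : contradiction
  · have hab : a = b := by rwa [inv_mul_eq_one] at hd
    subst hab
    exact absurd hb1 ha2
  -- a⁻¹ ∈ P, b ∈ P, a⁻¹b ∈ P : a < 1 < b
  · have hv := cc_pos (P := P) ((coneLt_one_inv a).2 ha1) ((coneLt_one_iff b).2 hb1)
    rw [cc_cyc] at hv
    rw [cc_swap hP 1 b a, hv]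
    simp [Sg, ha1, ha2, hb1, hd1]
  -- a⁻¹ ∈ P, b ∈ P, b⁻¹a ∈ P : contradiction
  · exfalso
    have hd1' : b⁻¹ * a ∈ P := by simpa [mul_inv_rev] using hd1
    have := hP.1 b hb1 _ hd1'
    simp only [mul_inv_cancel_left] at this
    exact absurd this ha2
  -- a⁻¹ ∈ P, b⁻¹ ∈ P, a⁻¹b = 1
  · have hab : a = b := by rwa [inv_mul_eq_one] at hd
    subst hab
    rw [cc_zero23 hP]
    simp [Sg, ha1, ha2, one_not_P hP, hd]
  -- a⁻¹ ∈ P, b⁻¹ ∈ P, a⁻¹b ∈ P : a < b < 1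
  · have hv := cc_pos (P := P) (show coneLt P a b from hd1) ((coneLt_one_inv b).2 hb1)
    rw [cc_cyc, cc_cyc] at hv
    rw [hv]
    simp [Sg, ha1, ha2, hb1, hb2, hd1]
  -- a⁻¹ ∈ P, b⁻¹ ∈ P, b⁻¹a ∈ P : b < a < 1
  · have hba : coneLt P b a := by simpa [coneLt, mul_inv_rev] using hd1
    have hv := cc_pos (P := P) hba ((coneLt_one_inv a).2 ha1)
    have hd1' : b⁻¹ * a ∈ P := by simpa [mul_inv_rev] using hd1
    rw [cc_cyc, cc_cyc] at hv
    rw [cc_swap hP 1 b a, hv]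
    simp [Sg, ha1, ha2, hb1, hb2, hd1', hd2]

end Aux3
section Aux4

variable {H : Type*} [Group H] {K : Subgroup G} {P : Set G}

lemma c_cyc {c : H → H → H → ℤ} (hc : IsCircOrd c) (x y z : H) :
    c x y z = c y z x := by
  have h := hc.2.2.1 x y z x
  have h1 : c x z x = 0 := (hc.1 x z x).2 (Or.inr (Or.inl rfl))
  have h2 : c x y x = 0 := (hc.1 x y x).2 (Or.inr (Or.inl rfl))
  omega

lemma c_swap {c : H → H → H → ℤ} (hc : IsCircOrd c) (x y z : H) :
    c x z y = - c x y z := by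
  have h := hc.2.2.1 x y z y
  have h1 : c y z y = 0 := (hc.1 y z y).2 (Or.inr (Or.inl rfl))
  have h2 : c x y y = 0 := (hc.1 x y y).2 (Or.inr (Or.inr rfl))
  omega

lemma diff_ker {q : G →* H} {a b : G} (h : q a = q b) : a⁻¹ * b ∈ q.ker := by
  simp [MonoidHom.mem_ker, h]

lemma lex_dd {q : G →* H} {c : H → H → H → ℤ} {g₁ g₂ g₃ : G}
    (h12 : q g₁ ≠ q g₂) (h13 : q g₁ ≠ q g₃) (h23 : q g₂ ≠ q g₃) :
    lexExt q P c g₁ g₂ g₃ = c (q g₁) (q g₂) (q g₃) := by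
  unfold lexExt
  rw [if_pos ⟨h12, h13, h23⟩]

lemma lex_eee {q : G →* H} (hP : IsPositiveConeOn q.ker P) {c : H → H → H → ℤ} {g₁ g₂ g₃ : G}
    (h12 : q g₁ = q g₂) (h23 : q g₂ = q g₃) :
    lexExt q P c g₁ g₂ g₃ = circOfCone P 1 (g₁⁻¹ * g₂) (g₁⁻¹ * g₃) := by
  unfold lexExt
  rw [if_neg (by tauto), if_pos ⟨h12, h23⟩]

lemma lexS12 {q : G →* H} (hP : IsPositiveConeOn q.ker P) {c : H → H → H → ℤ} {g₁ g₂ g₃ : G}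
    (h12 : q g₁ = q g₂) (h13 : q g₁ ≠ q g₃) :
    lexExt q P c g₁ g₂ g₃ = Sg P (g₁⁻¹ * g₂) := by
  unfold lexExt
  rw [if_neg (by tauto), if_neg (by rintro ⟨-, h⟩; exact h13 (h12.trans h)), if_pos h12]
  rw [show g₂⁻¹ * g₁ = (g₁⁻¹ * g₂)⁻¹ by simp]
  exact cc_inv_one hP (diff_ker h12)

lemma lexS23 {q : G →* H} (hP : IsPositiveConeOn q.ker P) {c : H → H → H → ℤ} {g₁ g₂ g₃ : G}
    (h23 : q g₂ = q g₃) (h12 : q g₁ ≠ q g₂) :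
    lexExt q P c g₁ g₂ g₃ = Sg P (g₂⁻¹ * g₃) := by
  unfold lexExt
  rw [if_neg (by tauto), if_neg (by tauto), if_neg (by tauto), if_pos h23]
  rw [show g₃⁻¹ * g₂ = (g₂⁻¹ * g₃)⁻¹ by simp]
  exact cc_inv_one hP (diff_ker h23)

lemma lexS13 {q : G →* H} (hP : IsPositiveConeOn q.ker P) {c : H → H → H → ℤ} {g₁ g₂ g₃ : G}
    (h13 : q g₁ = q g₃) (h12 : q g₁ ≠ q g₂) :
    lexExt q P c g₁ g₂ g₃ = Sg P (g₃⁻¹ * g₁) := by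
  unfold lexExt
  rw [if_neg (by tauto), if_neg (by tauto), if_neg (by tauto),
    if_neg (fun h => h12 (h13.trans h.symm))]
  rw [show g₁⁻¹ * g₃ = (g₃⁻¹ * g₁)⁻¹ by simp]
  exact cc_inv_one hP (diff_ker h13.symm)

end Aux4
section Aux5

variable {H : Type*} [Group H] {P : Set G}

lemma cc_one_zero_iff {K : Subgroup G} (hP : IsPositiveConeOn K P) {a b : G}
    (ha : a ∈ K) (hb : b ∈ K) :
    circOfCone P 1 a b = 0 ↔ (a = 1 ∨ b = 1 ∨ a = b) := by
  constructor
  · intro h0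
    by_contra hcon
    push_neg at hcon
    obtain ⟨ha1, hb1, hab⟩ := hcon
    rw [key hP ha hb] at h0
    have hd : a⁻¹ * b ≠ 1 := fun h => hab (by rwa [inv_mul_eq_one] at h)
    rcases tri hP ha with h | ⟨ha1', ha2'⟩ | ⟨ha1', ha2'⟩
    · exact ha1 h
    all_goals rcases tri hP hb with h | ⟨hb1', hb2'⟩ | ⟨hb1', hb2'⟩
    · exact hb1 h
    pick_goal 3
    · exact hb1 h
    all_goals rcases tri hP (kermul ha hb) with h | ⟨hd1', hd2'⟩ | ⟨hd1', hd2'⟩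
    · exact hd h
    · simp [Sg, ha1', hb1', hd1', hd2'] at h0
    · have hd1'' : b⁻¹ * a ∈ P := by simpa [mul_inv_rev] using hd1'
      simp [Sg, ha1', hb1', hd1'', hd2'] at h0
    · exact hd h
    · have := hP.1 a ha1' _ hd1'
      simp only [mul_inv_cancel_left] at this
      exact notboth hP this hb1'
    · have hd1'' : b⁻¹ * a ∈ P := by simpa [mul_inv_rev] using hd1'
      simp [Sg, ha1', ha2', hb1', hb2', hd1'', hd2'] at h0
    · exact hd h
    · simp [Sg, ha1', ha2', hb1', hd1'] at h0
    · have hd1'' : b⁻¹ * a ∈ P := by simpa [mul_inv_rev] using hd1'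
      have := hP.1 b hb1' _ hd1''
      simp only [mul_inv_cancel_left] at this
      exact absurd this ha2'
    · exact hd h
    · simp [Sg, ha1', ha2', hb1', hb2', hd1'] at h0
    · have hd1'' : b⁻¹ * a ∈ P := by simpa [mul_inv_rev] using hd1'
      simp [Sg, ha1', ha2', hb1', hb2', hd1'', hd2'] at h0
  · rintro (rfl | rfl | rfl)
    · exact cc_zero12 hP 1 b
    · exact cc_zero13 hP 1 a
    · exact cc_zero23 hP 1 a
end Aux5

section Aux6

variable {H : Type*} [Group H] {P : Set G} {q : G →* H} {c : H → H → H → ℤ}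

lemma lex_cyc (hP : IsPositiveConeOn q.ker P) (hc : IsCircOrd c) (g₁ g₂ g₃ : G) :
    lexExt q P c g₁ g₂ g₃ = lexExt q P c g₂ g₃ g₁ := by
  by_cases h12 : q g₁ = q g₂
  · by_cases h23 : q g₂ = q g₃
    · have h13 : q g₁ = q g₃ := h12.trans h23
      rw [lex_eee hP h12 h23, lex_eee hP h23 h13.symm,
        key hP (diff_ker h12) (diff_ker h13), key hP (diff_ker h23) (diff_ker h12.symm)]
      have e1 : (g₁⁻¹*g₂)⁻¹*(g₁⁻¹*g₃) = g₂⁻¹*g₃ := by group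
      have e2 : (g₂⁻¹*g₃)⁻¹*(g₂⁻¹*g₁) = g₃⁻¹*g₁ := by group
      rw [e1, e2]
      have e3 : Sg P (g₂⁻¹*g₁) = - Sg P (g₁⁻¹*g₂) := by
        rw [show g₂⁻¹*g₁ = (g₁⁻¹*g₂)⁻¹ by group]
        exact Sg_inv hP (diff_ker h12)
      have e4 : Sg P (g₃⁻¹*g₁) = - Sg P (g₁⁻¹*g₃) := by
        rw [show g₃⁻¹*g₁ = (g₁⁻¹*g₃)⁻¹ by group]
        exact Sg_inv hP (diff_ker h13)
      rw [e3, e4]; ring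
    · have h13 : q g₁ ≠ q g₃ := fun h => h23 (h12.symm.trans h)
      rw [lexS12 hP h12 h13, lexS13 hP h12.symm h23]
  · by_cases h13 : q g₁ = q g₃
    · have h23 : q g₂ ≠ q g₃ := fun h => h12 (h13.trans h.symm)
      rw [lexS13 hP h13 h12, lexS23 hP h13.symm h23]
    · by_cases h23 : q g₂ = q g₃
      · rw [lexS23 hP h23 h12, lexS12 hP h23 (fun h => h12 h.symm)]
      · rw [lex_dd h12 h13 h23, lex_dd h23 (fun h => h12 h.symm) (fun h => h13 h.symm),
          c_cyc hc]

lemma lex_swap (hP : IsPositiveConeOn q.ker P) (hc : IsCircOrd c) (g₁ g₂ g₃ : G) :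
    lexExt q P c g₁ g₃ g₂ = - lexExt q P c g₁ g₂ g₃ := by
  by_cases h12 : q g₁ = q g₂
  · by_cases h23 : q g₂ = q g₃
    · have h13 : q g₁ = q g₃ := h12.trans h23
      rw [lex_eee hP h12 h23, lex_eee hP h13 h23.symm]
      exact cc_swap hP 1 (g₁⁻¹*g₂) (g₁⁻¹*g₃)
    · have h13 : q g₁ ≠ q g₃ := fun h => h23 (h12.symm.trans h)
      rw [lexS12 hP h12 h13, lexS13 hP h12 h13]
      rw [show g₂⁻¹*g₁ = (g₁⁻¹*g₂)⁻¹ by group]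
      exact Sg_inv hP (diff_ker h12)
  · by_cases h13 : q g₁ = q g₃
    · have h23 : q g₂ ≠ q g₃ := fun h => h12 (h13.trans h.symm)
      rw [lexS13 hP h13 h12, lexS12 hP h13 h12]
      rw [show g₁⁻¹*g₃ = (g₃⁻¹*g₁)⁻¹ by group]
      exact Sg_inv hP (diff_ker h13.symm)
    · by_cases h23 : q g₂ = q g₃
      · rw [lexS23 hP h23 h12, lexS23 hP h23.symm h13]
        rw [show g₃⁻¹*g₂ = (g₂⁻¹*g₃)⁻¹ by group]
        exact Sg_inv hP (diff_ker h23)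
      · rw [lex_dd h12 h13 h23, lex_dd h13 h12 (fun h => h23 h.symm), c_swap hc]

end Aux6
section Aux7

variable {H : Type*} [Group H] {P : Set G} {q : G →* H} {c : H → H → H → ℤ}

lemma c_swap12 {c : H → H → H → ℤ} (hc : IsCircOrd c) (x y z : H) :
    c y x z = - c x y z := by
  rw [c_cyc hc y x z]; exact c_swap hc x y z

lemma lex_swap12 (hP : IsPositiveConeOn q.ker P) (hc : IsCircOrd c) (x y z : G) :
    lexExt q P c y x z = - lexExt q P c x y z := by
  rw [lex_cyc hP hc y x z]; exact lex_swap hP hc x y z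

lemma lex_zero_iff (hP : IsPositiveConeOn q.ker P) (hc : IsCircOrd c) (g₁ g₂ g₃ : G) :
    lexExt q P c g₁ g₂ g₃ = 0 ↔ (g₁ = g₂ ∨ g₁ = g₃ ∨ g₂ = g₃) := by
  by_cases h12 : q g₁ = q g₂
  · by_cases h23 : q g₂ = q g₃
    · have h13 : q g₁ = q g₃ := h12.trans h23
      rw [lex_eee hP h12 h23, cc_one_zero_iff hP (diff_ker h12) (diff_ker h13)]
      simp [inv_mul_eq_one, mul_right_inj]
    · have h13 : q g₁ ≠ q g₃ := fun h => h23 (h12.symm.trans h)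
      have n13 : g₁ ≠ g₃ := fun h => h13 (by rw [h])
      have n23 : g₂ ≠ g₃ := fun h => h23 (by rw [h])
      rw [lexS12 hP h12 h13, Sg_zero_iff hP (diff_ker h12)]
      simp [inv_mul_eq_one, n13, n23]
  · by_cases h13 : q g₁ = q g₃
    · have n12 : g₁ ≠ g₂ := fun h => h12 (by rw [h])
      have n23 : g₂ ≠ g₃ := fun h => h12 (h13.trans (by rw [h]))
      rw [lexS13 hP h13 h12, Sg_zero_iff hP (diff_ker h13.symm)]
      simp [inv_mul_eq_one, n12, n23]
      exact comm
    · by_cases h23 : q g₂ = q g₃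
      · have n12 : g₁ ≠ g₂ := fun h => h12 (by rw [h])
        have n13 : g₁ ≠ g₃ := fun h => h13 (by rw [h])
        rw [lexS23 hP h23 h12, Sg_zero_iff hP (diff_ker h23)]
        simp [inv_mul_eq_one, n12, n13]
      · have n12 : g₁ ≠ g₂ := fun h => h12 (by rw [h])
        have n13 : g₁ ≠ g₃ := fun h => h13 (by rw [h])
        have n23 : g₂ ≠ g₃ := fun h => h23 (by rw [h])
        rw [lex_dd h12 h13 h23, hc.1]
        simp [h12, h13, h23, n12, n13, n23]

lemma lex_cocycle (hP : IsPositiveConeOn q.ker P) (hc : IsCircOrd c) (g₁ g₂ g₃ g₄ : G) :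
    lexExt q P c g₂ g₃ g₄ - lexExt q P c g₁ g₃ g₄ + lexExt q P c g₁ g₂ g₄
      - lexExt q P c g₁ g₂ g₃ = 0 := by
  -- degenerate cases first
  by_cases e12 : g₁ = g₂
  · subst e12
    have z1 : lexExt q P c g₁ g₁ g₄ = 0 := (lex_zero_iff hP hc _ _ _).2 (Or.inl rfl)
    have z2 : lexExt q P c g₁ g₁ g₃ = 0 := (lex_zero_iff hP hc _ _ _).2 (Or.inl rfl)
    rw [z1, z2]; ring
  by_cases e13 : g₁ = g₃
  · subst e13
    have z1 : lexExt q P c g₁ g₁ g₄ = 0 := (lex_zero_iff hP hc _ _ _).2 (Or.inl rfl)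
    have z2 : lexExt q P c g₁ g₂ g₁ = 0 :=
      (lex_zero_iff hP hc _ _ _).2 (Or.inr (Or.inl rfl))
    have hs : lexExt q P c g₂ g₁ g₄ = - lexExt q P c g₁ g₂ g₄ := lex_swap12 hP hc _ _ _
    rw [z1, z2, hs]; ring
  by_cases e14 : g₁ = g₄
  · subst e14
    have z1 : lexExt q P c g₁ g₃ g₁ = 0 :=
      (lex_zero_iff hP hc _ _ _).2 (Or.inr (Or.inl rfl))
    have z2 : lexExt q P c g₁ g₂ g₁ = 0 :=
      (lex_zero_iff hP hc _ _ _).2 (Or.inr (Or.inl rfl))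
    have hs : lexExt q P c g₂ g₃ g₁ = lexExt q P c g₁ g₂ g₃ :=
      (lex_cyc hP hc g₁ g₂ g₃).symm
    rw [z1, z2, hs]; ring
  by_cases e23 : g₂ = g₃
  · subst e23
    have z1 : lexExt q P c g₂ g₂ g₄ = 0 := (lex_zero_iff hP hc _ _ _).2 (Or.inl rfl)
    have z2 : lexExt q P c g₁ g₂ g₂ = 0 :=
      (lex_zero_iff hP hc _ _ _).2 (Or.inr (Or.inr rfl))
    rw [z1, z2]; ring
  by_cases e24 : g₂ = g₄
  · subst e24
    have z1 : lexExt q P c g₂ g₃ g₂ = 0 :=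
      (lex_zero_iff hP hc _ _ _).2 (Or.inr (Or.inl rfl))
    have z2 : lexExt q P c g₁ g₂ g₂ = 0 :=
      (lex_zero_iff hP hc _ _ _).2 (Or.inr (Or.inr rfl))
    have hs : lexExt q P c g₁ g₃ g₂ = - lexExt q P c g₁ g₂ g₃ := lex_swap hP hc _ _ _
    rw [z1, z2, hs]; ring
  by_cases e34 : g₃ = g₄
  · subst e34
    have z1 : lexExt q P c g₂ g₃ g₃ = 0 :=
      (lex_zero_iff hP hc _ _ _).2 (Or.inr (Or.inr rfl))
    have z2 : lexExt q P c g₁ g₃ g₃ = 0 :=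
      (lex_zero_iff hP hc _ _ _).2 (Or.inr (Or.inr rfl))
    rw [z1, z2]; ring
  -- now the q-image case tree
  by_cases h12 : q g₁ = q g₂
  · by_cases h13 : q g₁ = q g₃
    · have h23 : q g₂ = q g₃ := h12.symm.trans h13
      by_cases h14 : q g₁ = q g₄
      · -- all images equal
        have h24 : q g₂ = q g₄ := h12.symm.trans h14
        have h34 : q g₃ = q g₄ := h13.symm.trans h14
        rw [lex_eee hP h23 h34, lex_eee hP h13 h34, lex_eee hP h12 h24, lex_eee hP h12 h23,
          key hP (diff_ker h23) (diff_ker h24), key hP (diff_ker h13) (diff_ker h14),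
          key hP (diff_ker h12) (diff_ker h14), key hP (diff_ker h12) (diff_ker h13),
          show (g₂⁻¹*g₃)⁻¹*(g₂⁻¹*g₄) = g₃⁻¹*g₄ by group,
          show (g₁⁻¹*g₃)⁻¹*(g₁⁻¹*g₄) = g₃⁻¹*g₄ by group,
          show (g₁⁻¹*g₂)⁻¹*(g₁⁻¹*g₄) = g₂⁻¹*g₄ by group,
          show (g₁⁻¹*g₂)⁻¹*(g₁⁻¹*g₃) = g₂⁻¹*g₃ by group]
        ring
      · -- q1 = q2 = q3 ≠ q4
        have h24 : q g₂ ≠ q g₄ := fun h => h14 (h12.trans h)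
        have h34 : q g₃ ≠ q g₄ := fun h => h14 (h13.trans h)
        rw [lexS12 hP h23 h24, lexS12 hP h13 h14, lexS12 hP h12 h14, lex_eee hP h12 h23,
          key hP (diff_ker h12) (diff_ker h13),
          show (g₁⁻¹*g₂)⁻¹*(g₁⁻¹*g₃) = g₂⁻¹*g₃ by group]
        ring
    · by_cases h14 : q g₁ = q g₄
      · -- q1 = q2 = q4 ≠ q3
        have h24 : q g₂ = q g₄ := h12.symm.trans h14
        have h23 : q g₂ ≠ q g₃ := fun h => h13 (h12.trans h)
        have h43 : q g₄ ≠ q g₃ := fun h => h13 (h14.trans h)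
        rw [lexS13 hP h24 h23, lexS13 hP h14 h13, lex_eee hP h12 h24, lexS12 hP h12 h13,
          key hP (diff_ker h12) (diff_ker h14),
          show (g₁⁻¹*g₂)⁻¹*(g₁⁻¹*g₄) = g₂⁻¹*g₄ by group,
          show g₄⁻¹*g₂ = (g₂⁻¹*g₄)⁻¹ by group, Sg_inv hP (diff_ker h24),
          show g₄⁻¹*g₁ = (g₁⁻¹*g₄)⁻¹ by group, Sg_inv hP (diff_ker h14)]
        ring
      · by_cases h34 : q g₃ = q g₄
        · -- q1 = q2, q3 = q4, distinct pairs
          have h23 : q g₂ ≠ q g₃ := fun h => h13 (h12.trans h)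
          rw [lexS23 hP h34 h23, lexS23 hP h34 h13, lexS12 hP h12 h14, lexS12 hP h12 h13]
          ring
        · -- only q1 = q2
          have h23 : q g₂ ≠ q g₃ := fun h => h13 (h12.trans h)
          have h24 : q g₂ ≠ q g₄ := fun h => h14 (h12.trans h)
          rw [lex_dd h23 h24 h34, lex_dd h13 h14 h34, lexS12 hP h12 h14, lexS12 hP h12 h13,
            ← h12]
          ring
  · by_cases h13 : q g₁ = q g₃
    · by_cases h24 : q g₂ = q g₄
      · -- q1 = q3 ≠ q2 = q4
        have h23 : q g₂ ≠ q g₃ := fun h => h12 (h13.trans h.symm)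
        have h14 : q g₁ ≠ q g₄ := fun h => h12 (h.trans h24.symm)
        rw [lexS13 hP h24 h23, lexS12 hP h13 h14, lexS23 hP h24 h12, lexS13 hP h13 h12,
          show g₄⁻¹*g₂ = (g₂⁻¹*g₄)⁻¹ by group, Sg_inv hP (diff_ker h24),
          show g₃⁻¹*g₁ = (g₁⁻¹*g₃)⁻¹ by group, Sg_inv hP (diff_ker h13)]
        ring
      · by_cases h34 : q g₃ = q g₄
        · -- q1 = q3 = q4 ≠ q2
          have h14 : q g₁ = q g₄ := h13.trans h34
          have h23 : q g₂ ≠ q g₃ := fun h => h12 (h13.trans h.symm)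
          rw [lexS23 hP h34 h23, lex_eee hP h13 h34, lexS13 hP h14 h12, lexS13 hP h13 h12,
            key hP (diff_ker h13) (diff_ker h14),
            show (g₁⁻¹*g₃)⁻¹*(g₁⁻¹*g₄) = g₃⁻¹*g₄ by group,
            show g₄⁻¹*g₁ = (g₁⁻¹*g₄)⁻¹ by group, Sg_inv hP (diff_ker h14),
            show g₃⁻¹*g₁ = (g₁⁻¹*g₃)⁻¹ by group, Sg_inv hP (diff_ker h13)]
          ring
        · -- only q1 = q3
          have h23 : q g₂ ≠ q g₃ := fun h => h12 (h13.trans h.symm)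
          have h24 : q g₂ ≠ q g₄ := h24
          have h14 : q g₁ ≠ q g₄ := fun h => h34 (h13.symm.trans h)
          rw [lex_dd h23 h24 h34, lexS12 hP h13 h14, lex_dd h12 h14 h24, lexS13 hP h13 h12,
            show g₃⁻¹*g₁ = (g₁⁻¹*g₃)⁻¹ by group, Sg_inv hP (diff_ker h13), ← h13,
            c_swap12 hc (q g₁) (q g₂) (q g₄)]
          ring
    · by_cases h14 : q g₁ = q g₄
      · by_cases h23 : q g₂ = q g₃
        · -- q1 = q4 ≠ q2 = q3
          have h24 : q g₂ ≠ q g₄ := fun h => h12 (h14.trans h.symm)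
          rw [lexS12 hP h23 h24, lexS13 hP h14 h13, lexS13 hP h14 h12, lexS23 hP h23 h12]
          ring
        · -- only q1 = q4
          have h24 : q g₂ ≠ q g₄ := fun h => h12 (h14.trans h.symm)
          have h34 : q g₃ ≠ q g₄ := fun h => h13 (h14.trans h.symm)
          rw [lex_dd h23 h24 h34, lexS13 hP h14 h13, lexS13 hP h14 h12,
            lex_dd h12 h13 h23, ← h14, ← c_cyc hc (q g₁) (q g₂) (q g₃)]
          ring
      · by_cases h23 : q g₂ = q g₃
        · by_cases h24 : q g₂ = q g₄
          · -- q2 = q3 = q4 ≠ q1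
            have h34 : q g₃ = q g₄ := h23.symm.trans h24
            rw [lex_eee hP h23 h34, lexS23 hP h34 h13, lexS23 hP h24 h12, lexS23 hP h23 h12,
              key hP (diff_ker h23) (diff_ker h24),
              show (g₂⁻¹*g₃)⁻¹*(g₂⁻¹*g₄) = g₃⁻¹*g₄ by group]
            ring
          · -- only q2 = q3
            have h34 : q g₃ ≠ q g₄ := fun h => h24 (h23.trans h)
            rw [lexS12 hP h23 h24, lex_dd h13 h14 h34, lex_dd h12 h14 h24,
              lexS23 hP h23 h12, ← h23]
            ring
        · by_cases h24 : q g₂ = q g₄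
          · -- only q2 = q4
            have h34 : q g₃ ≠ q g₄ := fun h => h23 (h24.trans h.symm)
            rw [lexS13 hP h24 h23, lex_dd h13 h14 h34, lexS23 hP h24 h12,
              lex_dd h12 h13 h23, show g₄⁻¹*g₂ = (g₂⁻¹*g₄)⁻¹ by group,
              Sg_inv hP (diff_ker h24), h24, c_swap hc (q g₁) (q g₃) (q g₄)]
            ring
          · by_cases h34 : q g₃ = q g₄
            · -- only q3 = q4
              rw [lexS23 hP h34 h23, lexS23 hP h34 h13, lex_dd h12 h14 h24,
                lex_dd h12 h13 h23, h34]
              ring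
            · -- all images distinct
              rw [lex_dd h23 h24 h34, lex_dd h13 h14 h34, lex_dd h12 h14 h24,
                lex_dd h12 h13 h23]
              exact hc.2.2.1 (q g₁) (q g₂) (q g₃) (q g₄)

end Aux7
section Aux8

variable {H : Type*} [Group H] {P : Set G} {q : G →* H} {c : H → H → H → ℤ}

lemma lex_range (hc : IsCircOrd c) (g₁ g₂ g₃ : G) :
    lexExt q P c g₁ g₂ g₃ = 0 ∨ lexExt q P c g₁ g₂ g₃ = 1 ∨ lexExt q P c g₁ g₂ g₃ = -1 := by
  classical
  unfold lexExt
  split_ifs <;> first | exact hc.2.1 _ _ _ | apply cc_range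

lemma lex_leftinv (hc : IsCircOrd c) (g g₁ g₂ g₃ : G) :
    lexExt q P c (g*g₁) (g*g₂) (g*g₃) = lexExt q P c g₁ g₂ g₃ := by
  classical
  have hq : ∀ x y : G, q (g*x) = q (g*y) ↔ q x = q y := by
    intro x y; simp [map_mul]
  have he : ∀ x y : G, (g*x)⁻¹ * (g*y) = x⁻¹ * y := by
    intro x y; group
  unfold lexExt
  simp only [hq, he]
  have hcnd : (q (g*g₁) ≠ q (g*g₂) ∧ q (g*g₁) ≠ q (g*g₃) ∧ q (g*g₂) ≠ q (g*g₃)) ↔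
      (q g₁ ≠ q g₂ ∧ q g₁ ≠ q g₃ ∧ q g₂ ≠ q g₃) := by simp [hq]
  by_cases h : q g₁ ≠ q g₂ ∧ q g₁ ≠ q g₃ ∧ q g₂ ≠ q g₃
  · rw [if_pos (hcnd.2 h), if_pos h, map_mul, map_mul, map_mul, hc.2.2.2]
  · rw [if_neg (fun hx => h (hcnd.1 hx)), if_neg h]

theorem lex_isCircOrd (hP : IsPositiveConeOn q.ker P) (hc : IsCircOrd c) :
    IsCircOrd (lexExt q P c) :=
  ⟨lex_zero_iff hP hc, lex_range hc, lex_cocycle hP hc, lex_leftinv hc⟩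

end Aux8
/-- Lemma 5.1: given a short exact sequence `1 → K → G → H → 1` (here `q : G → H` is
surjective with kernel `K`) and a left-ordering `<` of `K`, the lexicographic extension
`φ_<(c)` is a circular ordering of `G` for every `c ∈ CO(H)`, and the resulting map
`φ_< : CO(H) → CO(G)` is continuous. -/
theorem stmt11 {H : Type*} [Group H] (q : G →* H) (hq : Function.Surjective q)
    (P : Set G) (hP : IsPositiveConeOn q.ker P) :
    (∀ c : CircOrd H, IsCircOrd (lexExt q P c.1)) ∧
    ∃ Φ : CircOrd H → CircOrd G, Continuous Φ ∧ ∀ c : CircOrd H, (Φ c).1 = lexExt q P c.1 := by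
  classical
  have h1 : ∀ c : CircOrd H, IsCircOrd (lexExt q P c.1) := fun c => lex_isCircOrd hP c.2
  refine ⟨h1, ⟨fun c => ⟨lexExt q P c.1, h1 c⟩, ?_, fun c => rfl⟩⟩
  apply Continuous.subtype_mk
  apply continuous_pi; intro g₁
  apply continuous_pi; intro g₂
  apply continuous_pi; intro g₃
  by_cases h : q g₁ ≠ q g₂ ∧ q g₁ ≠ q g₃ ∧ q g₂ ≠ q g₃
  · have he : (fun c : CircOrd H => lexExt q P c.1 g₁ g₂ g₃) =
        fun c => c.1 (q g₁) (q g₂) (q g₃) := funext fun c => by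
      unfold lexExt; rw [if_pos h]
    rw [he]
    exact (continuous_apply _).comp ((continuous_apply _).comp
      ((continuous_apply _).comp continuous_subtype_val))
  · have he : (fun c : CircOrd H => lexExt q P c.1 g₁ g₂ g₃) = fun _ =>
        (if q g₁ = q g₂ ∧ q g₂ = q g₃ then circOfCone P 1 (g₁⁻¹ * g₂) (g₁⁻¹ * g₃)
        else if q g₁ = q g₂ then circOfCone P (g₂⁻¹ * g₁) 1 (g₁⁻¹ * g₂)
        else if q g₂ = q g₃ then circOfCone P (g₃⁻¹ * g₂) 1 (g₂⁻¹ * g₃)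
        else circOfCone P (g₁⁻¹ * g₃) 1 (g₃⁻¹ * g₁)) := funext fun c => by
      unfold lexExt; rw [if_neg h]
    rw [he]
    exact continuous_const

end Paper
end
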